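/- The bivector Λ₈ = b(x²+y²)∂₁∧∂₂ + (2b+c)xz∂₂∧∂₃ + (2b+c)yz∂₃∧∂₁ + z²∂₁∧∂₂ on ℝ³ is a Poisson bivector for all real b, c (taking the + sign for the z² term). -/
import Mathlib


open MvPolynomial

lemma pderiv_comm' {σ : Type*} (i j : σ) (f : MvPolynomial σ ℝ) :
    pderiv i (pderiv j f) = pderiv j (pderiv i f) := by
  classical
  induction f using MvPolynomial.induction_on with
  | C a => simp
  | add p q hp hq => simp [hp, hq]
  | mul_X p n hp =>
    by_cases hni : n = i
    · subst hni
      by_cases hnj : n = j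
      · subst hnj; simp [pderiv_mul, pderiv_X_self, hp]
      · simp [pderiv_mul, pderiv_X_self, pderiv_X_of_ne hnj, hp]; ring
    · by_cases hnj : n = j
      · subst hnj; simp [pderiv_mul, pderiv_X_self, pderiv_X_of_ne hni, hp]; ring
      · simp [pderiv_mul, pderiv_X_of_ne hni, pderiv_X_of_ne hnj, hp]

lemma pd01 : pderiv (0:Fin 3) (X 1 : MvPolynomial (Fin 3) ℝ) = 0 := pderiv_X_of_ne (by decide)
lemma pd02 : pderiv (0:Fin 3) (X 2 : MvPolynomial (Fin 3) ℝ) = 0 := pderiv_X_of_ne (by decide)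
lemma pd10 : pderiv (1:Fin 3) (X 0 : MvPolynomial (Fin 3) ℝ) = 0 := pderiv_X_of_ne (by decide)
lemma pd12 : pderiv (1:Fin 3) (X 2 : MvPolynomial (Fin 3) ℝ) = 0 := pderiv_X_of_ne (by decide)
lemma pd20 : pderiv (2:Fin 3) (X 0 : MvPolynomial (Fin 3) ℝ) = 0 := pderiv_X_of_ne (by decide)
lemma pd21 : pderiv (2:Fin 3) (X 1 : MvPolynomial (Fin 3) ℝ) = 0 := pderiv_X_of_ne (by decide)

/-- The Poisson bracket `{f,g} = Λ(df,dg)` of the bivector on ℝ³ with components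
`A23 = Λ²³`, `A31 = Λ³¹`, `A12 = Λ¹²` (coordinates `x = X 0`, `y = X 1`, `z = X 2`). -/
noncomputable def pbr (A23 A31 A12 f g : MvPolynomial (Fin 3) ℝ) : MvPolynomial (Fin 3) ℝ :=
  A23 * (pderiv 1 f * pderiv 2 g - pderiv 2 f * pderiv 1 g)
  + A31 * (pderiv 2 f * pderiv 0 g - pderiv 0 f * pderiv 2 g)
  + A12 * (pderiv 0 f * pderiv 1 g - pderiv 1 f * pderiv 0 g)

set_option maxHeartbeats 2000000 in
lemma jacobi (A1 A2 A3 f g h : MvPolynomial (Fin 3) ℝ) :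
    pbr A1 A2 A3 f (pbr A1 A2 A3 g h) + pbr A1 A2 A3 g (pbr A1 A2 A3 h f)
      + pbr A1 A2 A3 h (pbr A1 A2 A3 f g)
    + (A1 * (pderiv 1 A3 - pderiv 2 A2) + A2 * (pderiv 2 A1 - pderiv 0 A3)
        + A3 * (pderiv 0 A2 - pderiv 1 A1))
      * (pderiv 0 f * (pderiv 1 g * pderiv 2 h - pderiv 2 g * pderiv 1 h)
         - pderiv 1 f * (pderiv 0 g * pderiv 2 h - pderiv 2 g * pderiv 0 h)
         + pderiv 2 f * (pderiv 0 g * pderiv 1 h - pderiv 1 g * pderiv 0 h)) = 0 := by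
  simp only [pbr, map_add, map_sub, pderiv_mul,
    pderiv_comm' (1:Fin 3) 0, pderiv_comm' (2:Fin 3) 0, pderiv_comm' (2:Fin 3) 1]
  ring

set_option maxHeartbeats 4000000 in
/-- The bivector `Λ₈ = b(x²+y²)∂₁∧∂₂ + (2b+c)xz∂₂∧∂₃ + (2b+c)yz∂₃∧∂₁ + z²∂₁∧∂₂`
on ℝ³ is a Poisson bivector for all real `b, c` (taking the + sign for `z²`). -/

theorem stmt18 (b c : ℝ) (f g h : MvPolynomial (Fin 3) ℝ) :
    pbr (C (2*b+c) * (X 0 * X 2)) (C (2*b+c) * (X 1 * X 2))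
        (C b * (X 0 ^ 2 + X 1 ^ 2) + X 2 ^ 2) f
      (pbr (C (2*b+c) * (X 0 * X 2)) (C (2*b+c) * (X 1 * X 2))
        (C b * (X 0 ^ 2 + X 1 ^ 2) + X 2 ^ 2) g h)
    + pbr (C (2*b+c) * (X 0 * X 2)) (C (2*b+c) * (X 1 * X 2))
        (C b * (X 0 ^ 2 + X 1 ^ 2) + X 2 ^ 2) g
      (pbr (C (2*b+c) * (X 0 * X 2)) (C (2*b+c) * (X 1 * X 2))
        (C b * (X 0 ^ 2 + X 1 ^ 2) + X 2 ^ 2) h f)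
    + pbr (C (2*b+c) * (X 0 * X 2)) (C (2*b+c) * (X 1 * X 2))
        (C b * (X 0 ^ 2 + X 1 ^ 2) + X 2 ^ 2) h
      (pbr (C (2*b+c) * (X 0 * X 2)) (C (2*b+c) * (X 1 * X 2))
        (C b * (X 0 ^ 2 + X 1 ^ 2) + X 2 ^ 2) f g)
    = 0 := by
  have hE : (C (2*b+c) * (X 0 * X 2)) * (pderiv 1 (C b * (X 0 ^ 2 + X 1 ^ 2) + X 2 ^ 2)
        - pderiv 2 (C (2*b+c) * (X 1 * X 2)))
      + (C (2*b+c) * (X 1 * X 2)) * (pderiv 2 (C (2*b+c) * (X 0 * X 2))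
        - pderiv 0 (C b * (X 0 ^ 2 + X 1 ^ 2) + X 2 ^ 2))
      + (C b * (X 0 ^ 2 + X 1 ^ 2) + X 2 ^ 2) * (pderiv 0 (C (2*b+c) * (X 1 * X 2))
        - pderiv 1 (C (2*b+c) * (X 0 * X 2)))
      = (0 : MvPolynomial (Fin 3) ℝ) := by
    simp only [map_add, map_sub, pderiv_mul, pderiv_pow, pderiv_C,
      pderiv_X_self, pd01, pd02, pd10, pd12, pd20, pd21]
    ring
  have h1 := jacobi (C (2*b+c) * (X 0 * X 2)) (C (2*b+c) * (X 1 * X 2))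
    (C b * (X 0 ^ 2 + X 1 ^ 2) + X 2 ^ 2) f g h
  rw [hE, zero_mul, add_zero] at h1
  exact h1
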